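/- Let p be an odd prime and k a finite extension of ℚ_p containing μ_p, with e_0 = v_k(p)/(p−1). For every integer m with 0 ≤ m < p·e_0 and p ∣ m, one has Ū_k^m = Ū_k^{m+1}, i.e. the quotient Ū_k^m/Ū_k^{m+1} is trivial. -/

import Mathlib

set_option linter.unusedSectionVars false

/-- The higher unit groups `U_k^m`. -/
noncomputable def higherUnits {k : Type*} [Field k] (v : k → ℤ) (m : ℤ) : Subgroup kˣ :=
  Subgroup.closure {u : kˣ | if m ≤ 0 then v (u : k) = 0
    else ((u : k) - 1 = 0 ∨ m ≤ v ((u : k) - 1))}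

/-- The subgroup of `p`-th powers in `k^×`. -/
noncomputable def pthPowers (p : ℕ) (k : Type*) [Field k] : Subgroup kˣ :=
  (powMonoidHom p : kˣ →* kˣ).range

/-- `Ū_k^m`: the image of `U_k^m` in `k^×/(k^×)^p`. -/
noncomputable def higherUnitsBar (p : ℕ) {k : Type*} [Field k] (v : k → ℤ) (m : ℤ) :
    Subgroup (kˣ ⧸ pthPowers p k) :=
  Subgroup.map (QuotientGroup.mk' (pthPowers p k)) (higherUnits v m)


section Aux

variable {p : ℕ} [hp : Fact p.Prime]
variable {k : Type*} [Field k]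
variable {v : k → ℤ}

lemma v_one' (Hmul : ∀ x y : k, x ≠ 0 → y ≠ 0 → v (x * y) = v x + v y) :
    v (1 : k) = 0 := by
  have h := Hmul 1 1 one_ne_zero one_ne_zero
  rw [one_mul] at h; linarith

lemma v_neg' (Hmul : ∀ x y : k, x ≠ 0 → y ≠ 0 → v (x * y) = v x + v y)
    {x : k} (hx : x ≠ 0) : v (-x) = v x := by
  have hm1 : v (-1 : k) = 0 := by
    have h := Hmul (-1) (-1) (by norm_num) (by norm_num)
    rw [neg_mul_neg, one_mul, v_one' Hmul] at h; linarith
  have h := Hmul (-1) x (by norm_num) hx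
  rw [neg_one_mul] at h; rw [h, hm1]; ring

lemma v_inv' (Hmul : ∀ x y : k, x ≠ 0 → y ≠ 0 → v (x * y) = v x + v y)
    {x : k} (hx : x ≠ 0) : v x⁻¹ = -v x := by
  have h := Hmul x x⁻¹ hx (inv_ne_zero hx)
  rw [mul_inv_cancel₀ hx, v_one' Hmul] at h; linarith

lemma v_pow' (Hmul : ∀ x y : k, x ≠ 0 → y ≠ 0 → v (x * y) = v x + v y)
    {x : k} (hx : x ≠ 0) (n : ℕ) : v (x ^ n) = n * v x := by
  induction n with
  | zero => simpa using v_one' Hmul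
  | succ n ih =>
      rw [pow_succ, Hmul _ _ (pow_ne_zero n hx) hx, ih]
      push_cast; ring

lemma v_zpow' (Hmul : ∀ x y : k, x ≠ 0 → y ≠ 0 → v (x * y) = v x + v y)
    {x : k} (hx : x ≠ 0) (n : ℤ) : v (x ^ n) = n * v x := by
  cases n with
  | ofNat n => rw [Int.ofNat_eq_coe, zpow_natCast, v_pow' Hmul hx]
  | negSucc n =>
      rw [zpow_negSucc, v_inv' Hmul (pow_ne_zero _ hx), v_pow' Hmul hx, Int.negSucc_eq]
      push_cast; ring

lemma v_add_ge' (Hadd : ∀ x y : k, x ≠ 0 → y ≠ 0 → x + y ≠ 0 → min (v x) (v y) ≤ v (x + y))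
    {x y : k} {M : ℤ} (hx : x = 0 ∨ M ≤ v x) (hy : y = 0 ∨ M ≤ v y) :
    x + y = 0 ∨ M ≤ v (x + y) := by
  rcases eq_or_ne (x + y) 0 with h | h
  · exact Or.inl h
  rcases eq_or_ne x 0 with rfl | hx0
  · rw [zero_add] at h ⊢; exact Or.inr (hy.resolve_left h)
  rcases eq_or_ne y 0 with rfl | hy0
  · rw [add_zero] at h ⊢; exact Or.inr (hx.resolve_left h)
  refine Or.inr (le_trans (le_min (hx.resolve_left hx0) (hy.resolve_left hy0))
    (Hadd x y hx0 hy0 h))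

lemma v_sum_ge' (Hadd : ∀ x y : k, x ≠ 0 → y ≠ 0 → x + y ≠ 0 → min (v x) (v y) ≤ v (x + y))
    {ι : Type*} (s : Finset ι) (f : ι → k) (M : ℤ)
    (h : ∀ i ∈ s, f i = 0 ∨ M ≤ v (f i)) :
    (∑ i ∈ s, f i) = 0 ∨ M ≤ v (∑ i ∈ s, f i) := by
  classical
  induction s using Finset.induction_on with
  | empty => simp
  | @insert a s ha ih =>
      rw [Finset.sum_insert ha]
      exact v_add_ge' Hadd (h a (Finset.mem_insert_self a s))
        (ih fun i hi => h i (Finset.mem_insert_of_mem hi))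

lemma v_one_add' (Hmul : ∀ x y : k, x ≠ 0 → y ≠ 0 → v (x * y) = v x + v y)
    (Hadd : ∀ x y : k, x ≠ 0 → y ≠ 0 → x + y ≠ 0 → min (v x) (v y) ≤ v (x + y))
    {b : k} (hb : b ≠ 0) (h1 : 1 ≤ v b) : 1 + b ≠ 0 ∧ v (1 + b) = 0 := by
  have hne : (1 : k) + b ≠ 0 := by
    intro h
    have : b = -1 := by linear_combination h
    rw [this, v_neg' Hmul (one_ne_zero), v_one' Hmul] at h1; omega
  refine ⟨hne, le_antisymm ?_ ?_⟩
  · by_contra hlt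
    push_neg at hlt
    have h2 := Hadd (1 + b) (-b) hne (neg_ne_zero.mpr hb) (by
      intro h; exact one_ne_zero (α := k) (by linear_combination h))
    rw [add_neg_cancel_right, v_one' Hmul, v_neg' Hmul hb] at h2
    omega
  · have h2 := Hadd 1 b one_ne_zero hb hne
    rw [v_one' Hmul] at h2
    omega

lemma padic_val_nonneg {y : ℚ_[p]} (hy : ‖y‖ ≤ 1) : 0 ≤ y.valuation :=
  (Padic.norm_le_one_iff_val_nonneg y).mp hy

variable [Algebra ℚ_[p] k] [FiniteDimensional ℚ_[p] k]

lemma v_algMap_nonneg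
    (Hint : ∀ x : k, x ≠ 0 → (0 ≤ v x ↔ 0 ≤ (Algebra.norm ℚ_[p] x).valuation))
    {e : ℚ_[p]} (he : ‖e‖ ≤ 1) (h0 : e ≠ 0) :
    0 ≤ v (algebraMap ℚ_[p] k e) := by
  have hne : algebraMap ℚ_[p] k e ≠ 0 := by
    simpa using (map_ne_zero (algebraMap ℚ_[p] k)).mpr h0
  rw [Hint _ hne, Algebra.norm_algebraMap]
  exact padic_val_nonneg (by
    calc ‖e ^ Module.finrank ℚ_[p] k‖ = ‖e‖ ^ Module.finrank ℚ_[p] k := norm_pow _ _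
    _ ≤ 1 := pow_le_one₀ (norm_nonneg _) he)

lemma v_natCast_nonneg
    (Hint : ∀ x : k, x ≠ 0 → (0 ≤ v x ↔ 0 ≤ (Algebra.norm ℚ_[p] x).valuation))
    {N : ℕ} (hN : N ≠ 0) : 0 ≤ v ((N : ℕ) : k) := by
  have : ((N : ℕ) : k) = algebraMap ℚ_[p] k ((N : ℕ) : ℚ_[p]) := by
    rw [map_natCast]
  rw [this]
  exact v_algMap_nonneg Hint (by
      simpa using Padic.norm_int_le_one (p := p) (N : ℤ))
    (Nat.cast_ne_zero.mpr hN)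

end Aux

section Frob

variable {p : ℕ} [hp : Fact p.Prime]
variable {k : Type*} [Field k]

/-- The valuation ring of `v`. -/
def Oring (v : k → ℤ)
    (Hmul : ∀ x y : k, x ≠ 0 → y ≠ 0 → v (x * y) = v x + v y)
    (Hadd : ∀ x y : k, x ≠ 0 → y ≠ 0 → x + y ≠ 0 → min (v x) (v y) ≤ v (x + y)) :
    Subring k where
  carrier := {x : k | x = 0 ∨ 0 ≤ v x}
  zero_mem' := Or.inl rfl
  one_mem' := Or.inr (le_of_eq (v_one' Hmul).symm)
  add_mem' := fun hx hy => v_add_ge' Hadd hx hy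
  neg_mem' := by
    rintro x (rfl | hx)
    · simp
    rcases eq_or_ne x 0 with rfl | hx0
    · simp
    · exact Or.inr (by rw [v_neg' Hmul hx0]; exact hx)
  mul_mem' := by
    rintro x y hx hy
    rcases eq_or_ne x 0 with rfl | hx0
    · simp
    rcases eq_or_ne y 0 with rfl | hy0
    · simp
    refine Or.inr ?_
    rw [Hmul x y hx0 hy0]
    exact add_nonneg (hx.resolve_left hx0) (hy.resolve_left hy0)

variable (v : k → ℤ)
  (Hmul : ∀ x y : k, x ≠ 0 → y ≠ 0 → v (x * y) = v x + v y)
  (Hadd : ∀ x y : k, x ≠ 0 → y ≠ 0 → x + y ≠ 0 → min (v x) (v y) ≤ v (x + y))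

lemma mem_Oring_iff {x : k} : x ∈ Oring v Hmul Hadd ↔ (x = 0 ∨ 0 ≤ v x) := Iff.rfl

/-- The maximal ideal of the valuation ring. -/
def Mideal : Ideal (Oring v Hmul Hadd) where
  carrier := {x | (x : k) = 0 ∨ 1 ≤ v (x : k)}
  zero_mem' := Or.inl rfl
  add_mem' := fun {x y} hx hy => by
    have h := v_add_ge' Hadd (M := 1) hx hy
    show ((x : k) + (y : k) = 0 ∨ 1 ≤ v ((x : k) + (y : k)))
    exact h
  smul_mem' := by
    intro c x hx
    have hcx : ((c • x : Oring v Hmul Hadd) : k) = (c : k) * (x : k) := rfl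
    rcases eq_or_ne ((x : k)) 0 with hx0 | hx0
    · left; rw [hcx, hx0, mul_zero]
    rcases eq_or_ne ((c : k)) 0 with hc0 | hc0
    · left; rw [hcx, hc0, zero_mul]
    right
    rw [hcx, Hmul _ _ hc0 hx0]
    have h1 : 1 ≤ v (x : k) := hx.resolve_left hx0
    have h0 : 0 ≤ v (c : k) := ((mem_Oring_iff v Hmul Hadd).mp c.2).resolve_left hc0
    omega

lemma mem_Mideal_iff {x : Oring v Hmul Hadd} :
    x ∈ Mideal v Hmul Hadd ↔ ((x : k) = 0 ∨ 1 ≤ v (x : k)) := Iff.rfl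

lemma Mideal_isPrime : (Mideal v Hmul Hadd).IsPrime := by
  constructor
  · intro h
    have h1 : (1 : Oring v Hmul Hadd) ∈ Mideal v Hmul Hadd := h ▸ Submodule.mem_top
    rcases (mem_Mideal_iff v Hmul Hadd).mp h1 with h2 | h2
    · exact one_ne_zero (α := k) (by simpa using h2)
    · rw [OneMemClass.coe_one, v_one' Hmul] at h2; omega
  · intro x y hxy
    by_contra hcon
    push_neg at hcon
    obtain ⟨hx, hy⟩ := hcon
    rw [mem_Mideal_iff] at hx hy hxy
    push_neg at hx hy
    obtain ⟨hx0, hx1⟩ := hx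
    obtain ⟨hy0, hy1⟩ := hy
    have hvx : v (x : k) = 0 := by
      have := ((mem_Oring_iff v Hmul Hadd).mp x.2).resolve_left hx0; omega
    have hvy : v (y : k) = 0 := by
      have := ((mem_Oring_iff v Hmul Hadd).mp y.2).resolve_left hy0; omega
    have hco : ((x * y : Oring v Hmul Hadd) : k) = (x : k) * (y : k) := rfl
    rcases hxy with h | h
    · rw [hco] at h
      exact (mul_ne_zero hx0 hy0) h
    · rw [hco, Hmul _ _ hx0 hy0, hvx, hvy] at h; omega

end Frob

section Frob2

variable {p : ℕ} [hp : Fact p.Prime]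
variable {k : Type*} [Field k] [Algebra ℚ_[p] k] [FiniteDimensional ℚ_[p] k]


lemma exists_pth_root_of_algebraic {p : ℕ} [hp : Fact p.Prime] {R : Type*} [CommRing R]
    [IsDomain R] [Algebra (ZMod p) R] [CharP R p] {x : R}
    (hx : IsAlgebraic (ZMod p) x) : ∃ y : R, y ^ p = x := by
  classical
  set A := Algebra.adjoin (ZMod p) {x} with hA
  haveI : Module.Finite (ZMod p) A :=
    Module.Finite.iff_fg.mpr hx.isIntegral.fg_adjoin_singleton
  haveI : Finite A := Module.finite_of_finite (ZMod p)
  have hFinj : Function.Injective (fun y : A => (⟨(y : R) ^ p, pow_mem y.2 p⟩ : A)) := by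
    intro y z h
    have h1 : (y : R) ^ p = (z : R) ^ p := congrArg Subtype.val h
    have h2 : ((y : R) - z) ^ p = 0 := by rw [sub_pow_char, h1, sub_self]
    exact Subtype.ext (sub_eq_zero.mp (pow_eq_zero_iff hp.out.ne_zero |>.mp h2))
  obtain ⟨y, hy⟩ := Finite.injective_iff_surjective.mp hFinj
    ⟨x, Algebra.self_mem_adjoin_singleton _ _⟩
  exact ⟨(y : R), congrArg Subtype.val hy⟩

set_option maxHeartbeats 1000000 in
set_option synthInstance.maxHeartbeats 400000 in
lemma frob_step (v : k → ℤ)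
    (Hmul : ∀ x y : k, x ≠ 0 → y ≠ 0 → v (x * y) = v x + v y)
    (Hadd : ∀ x y : k, x ≠ 0 → y ≠ 0 → x + y ≠ 0 → min (v x) (v y) ≤ v (x + y))
    (Hint : ∀ x : k, x ≠ 0 → (0 ≤ v x ↔ 0 ≤ (Algebra.norm ℚ_[p] x).valuation))
    (hp1 : 1 ≤ v ((p : ℕ) : k))
    (a : k) (ha : a = 0 ∨ 0 ≤ v a) :
    ∃ d : k, (d = 0 ∨ 0 ≤ v d) ∧ (a - d ^ p = 0 ∨ 1 ≤ v (a - d ^ p)) := by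
  classical
  haveI : CharZero k := charZero_of_injective_algebraMap (algebraMap ℚ_[p] k).injective
  haveI : NeZero p := ⟨hp.out.ne_zero⟩
  set O := Oring v Hmul Hadd with hO
  set MM := Mideal v Hmul Hadd with hMM
  haveI : MM.IsPrime := Mideal_isPrime v Hmul Hadd
  let mk : O →+* (O ⧸ MM) := Ideal.Quotient.mk MM
  -- characteristic p
  have hcoe_nat : ∀ N : ℕ, (((N : ℕ) : O) : k) = ((N : ℕ) : k) := fun N => by push_cast; rfl
  have hpO : ((p : ℕ) : O) ∈ MM := by
    rw [mem_Mideal_iff, hcoe_nat]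
    exact Or.inr hp1
  have hpR : ((p : ℕ) : O ⧸ MM) = 0 := by
    have h1 : ((p : ℕ) : O ⧸ MM) = mk ((p : ℕ) : O) := by rw [map_natCast]
    rw [h1, Ideal.Quotient.eq_zero_iff_mem]
    exact hpO
  haveI : IsDomain (O ⧸ MM) := Ideal.Quotient.isDomain MM
  haveI : CharP (O ⧸ MM) p := (CharP.charP_iff_prime_eq_zero hp.out).mpr hpR
  letI : Algebra (ZMod p) (O ⧸ MM) := ZMod.algebra _ p
  -- the element
  set ξ : O := ⟨a, ha⟩ with hξ
  -- algebraicity of a over ℚ_p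
  haveI := Algebra.IsAlgebraic.of_finite ℚ_[p] k
  obtain ⟨f, hf0, hfa⟩ := Algebra.IsAlgebraic.isAlgebraic (R := ℚ_[p]) a
  obtain ⟨j, hjs, hjmax⟩ :=
    f.support.exists_max_image (fun i => ‖f.coeff i‖) (Polynomial.support_nonempty.mpr hf0)
  have hcj : f.coeff j ≠ 0 := Polynomial.mem_support_iff.mp hjs
  set e : ℕ → ℚ_[p] := fun i => f.coeff i / f.coeff j with he_def
  have he : ∀ i, ‖e i‖ ≤ 1 := by
    intro i
    by_cases hi : i ∈ f.support
    · rw [he_def]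
      simp only [norm_div]
      rw [div_le_one (norm_pos_iff.mpr hcj)]
      exact hjmax i hi
    · simp [he_def, Polynomial.notMem_support_iff.mp hi]
  have hej : e j = 1 := div_self hcj
  set s : Finset ℕ := Finset.range (f.natDegree + 1) with hs_def
  set w : ℕ → k := fun i => algebraMap ℚ_[p] k (e i) with hw_def
  have hwO : ∀ i, w i ∈ O := by
    intro i
    rcases eq_or_ne (e i) 0 with h0 | h0
    · rw [mem_Oring_iff]; left; simp [hw_def, h0]
    · exact Or.inr (v_algMap_nonneg Hint (he i) h0)
  set ω : ℕ → O := fun i => ⟨w i, hwO i⟩ with hω_def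
  -- the evaluation of the scaled polynomial at a vanishes
  have hsum : ∑ i ∈ s, w i * a ^ i = 0 := by
    have h1 : ∀ i, w i = algebraMap ℚ_[p] k (f.coeff j)⁻¹ * algebraMap ℚ_[p] k (f.coeff i) := by
      intro i
      rw [hw_def]
      simp only [he_def, div_eq_mul_inv, map_mul]
      ring
    calc ∑ i ∈ s, w i * a ^ i
        = algebraMap ℚ_[p] k (f.coeff j)⁻¹ *
            ∑ i ∈ s, algebraMap ℚ_[p] k (f.coeff i) * a ^ i := by
          rw [Finset.mul_sum]
          exact Finset.sum_congr rfl fun i _ => by rw [h1 i]; ring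
      _ = algebraMap ℚ_[p] k (f.coeff j)⁻¹ * Polynomial.aeval a f := by
          congr 1
          rw [Polynomial.aeval_eq_sum_range]
          exact Finset.sum_congr rfl fun i _ => by rw [Algebra.smul_def]
      _ = 0 := by rw [hfa, mul_zero]
  have hζ : (∑ i ∈ s, ω i * ξ ^ i) = 0 := by
    have hcoe : ((∑ i ∈ s, ω i * ξ ^ i : O) : k) = ∑ i ∈ s, w i * a ^ i := by
      push_cast
      rfl
    exact Subtype.ext (by rw [hcoe, hsum]; rfl)
  -- reduction of coefficients to ZMod p
  set mi : ℕ → ZMod p := fun i => PadicInt.toZMod (⟨e i, he i⟩ : ℤ_[p]) with hmi_def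
  set ni : ℕ → ℕ := fun i => (mi i).val with hni_def
  have hmi_cast : ∀ i, ((ni i : ℕ) : ZMod p) = mi i := fun i => ZMod.natCast_rightInverse (mi i)
  have hcong : ∀ i, mk (ω i) = ((ni i : ℕ) : O ⧸ MM) := by
    intro i
    have h1 : ω i - ((ni i : ℕ) : O) ∈ MM := by
      have hEker : ((show ℤ_[p] from ⟨e i, he i⟩) - ((ni i : ℕ) : ℤ_[p]) : ℤ_[p]) ∈
          Ideal.span {(p : ℤ_[p])} := by
        rw [← PadicInt.maximalIdeal_eq_span_p, ← PadicInt.ker_toZMod, RingHom.mem_ker,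
          map_sub, map_natCast, hmi_cast, hmi_def]
        exact sub_self _
      obtain ⟨t, ht⟩ := Ideal.mem_span_singleton'.mp hEker
      -- in ℚ_p : e i - ni i = t * p
      have hq : e i - ((ni i : ℕ) : ℚ_[p]) = ((t : ℚ_[p])) * ((p : ℕ) : ℚ_[p]) := by
        have := congrArg (fun z : ℤ_[p] => (z : ℚ_[p])) ht
        push_cast at this
        exact this.symm
      have hcoe2 : ((ω i - ((ni i : ℕ) : O) : O) : k) =
          algebraMap ℚ_[p] k (t : ℚ_[p]) * ((p : ℕ) : k) := by
        push_cast
        show w i - ((ni i : ℕ) : k) = _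
        have : ((ni i : ℕ) : k) = algebraMap ℚ_[p] k ((ni i : ℕ) : ℚ_[p]) := by
          rw [map_natCast]
        rw [hw_def, this, ← map_sub, hq, map_mul, map_natCast]
      rw [mem_Mideal_iff, hcoe2]
      rcases eq_or_ne ((t : ℚ_[p])) 0 with ht0 | ht0
      · left; rw [ht0, map_zero, zero_mul]
      right
      have hmapt : algebraMap ℚ_[p] k (t : ℚ_[p]) ≠ 0 := by
        simpa using (map_ne_zero (algebraMap ℚ_[p] k)).mpr ht0
      have hpk : ((p : ℕ) : k) ≠ 0 := Nat.cast_ne_zero.mpr hp.out.ne_zero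
      rw [Hmul _ _ hmapt hpk]
      have h0 : 0 ≤ v (algebraMap ℚ_[p] k (t : ℚ_[p])) :=
        v_algMap_nonneg Hint t.2 ht0
      omega
    have := (Ideal.Quotient.eq (I := MM)).mpr h1
    rwa [map_natCast] at this
  -- x̄ := mk ξ is algebraic over ZMod p
  have hxbar : ∑ i ∈ s, ((ni i : ℕ) : O ⧸ MM) * (mk ξ) ^ i = 0 := by
    have := congrArg mk hζ
    rw [map_sum, map_zero] at this
    rw [← this]
    exact Finset.sum_congr rfl fun i _ => by rw [map_mul, map_pow, hcong i]
  have hjs' : j ∈ s := Finset.mem_range.mpr (Nat.lt_succ_of_le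
    (Polynomial.le_natDegree_of_ne_zero hcj))
  set g : Polynomial (ZMod p) := ∑ i ∈ s, Polynomial.C (mi i) * Polynomial.X ^ i with hg_def
  have hg0 : g ≠ 0 := by
    intro hg
    have hcoeffj : g.coeff j = mi j := by
      rw [hg_def, Polynomial.finset_sum_coeff]
      rw [Finset.sum_eq_single j]
      · rw [Polynomial.coeff_C_mul_X_pow]; simp
      · intro b _ hb
        rw [Polynomial.coeff_C_mul_X_pow]
        simp [Ne.symm hb]
      · intro h; exact absurd hjs' h
    have h1' : (⟨e j, he j⟩ : ℤ_[p]) = (1 : ℤ_[p]) := Subtype.coe_injective (by simp [hej])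
    have hmij : mi j = 1 := by
      simp only [hmi_def]
      rw [h1', map_one]
    rw [hg, Polynomial.coeff_zero] at hcoeffj
    rw [hmij] at hcoeffj
    exact one_ne_zero hcoeffj.symm
  have hgeval : Polynomial.aeval (mk ξ) g = 0 := by
    rw [hg_def, map_sum]
    rw [← hxbar]
    refine Finset.sum_congr rfl fun i _ => ?_
    rw [map_mul, Polynomial.aeval_C, map_pow, Polynomial.aeval_X]
    congr 1
    rw [← hmi_cast i, map_natCast]
  have halg : IsAlgebraic (ZMod p) (mk ξ) := ⟨g, hg0, hgeval⟩
  obtain ⟨y, hy1⟩ := exists_pth_root_of_algebraic halg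
  obtain ⟨η, hη⟩ := Ideal.Quotient.mk_surjective (I := MM) y
  have hmem : ξ - η ^ p ∈ MM := by
    rw [← Ideal.Quotient.eq]
    show mk ξ = mk (η ^ p)
    rw [map_pow, hη, hy1]
  refine ⟨(η : k), (mem_Oring_iff v Hmul Hadd).mp η.2, ?_⟩
  have hcoe3 : ((ξ - η ^ p : O) : k) = a - (η : k) ^ p := by push_cast; rfl
  have := (mem_Mideal_iff v Hmul Hadd).mp hmem
  rwa [hcoe3] at this

end Frob2

section Main

lemma root_unit {p : ℕ} [hp : Fact p.Prime] {k : Type*} [Field k] {v : k → ℤ}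
    (Hmul : ∀ x y : k, x ≠ 0 → y ≠ 0 → v (x * y) = v x + v y)
    (Hadd : ∀ x y : k, x ≠ 0 → y ≠ 0 → x + y ≠ 0 → min (v x) (v y) ≤ v (x + y))
    {c d : k} (hc0 : c ≠ 0) (hvc : v c = 0)
    (hd : d = 0 ∨ 0 ≤ v d) (h2 : c - d ^ p = 0 ∨ 1 ≤ v (c - d ^ p)) :
    d ≠ 0 ∧ v d = 0 := by
  have hd0 : d ≠ 0 := by
    rintro rfl
    rw [zero_pow hp.out.ne_zero, sub_zero] at h2
    rcases h2 with h | h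
    · exact hc0 h
    · omega
  refine ⟨hd0, le_antisymm ?_ ((hd.resolve_left hd0))⟩
  by_contra hlt
  push_neg at hlt
  have hdp : v (d ^ p) = (p : ℤ) * v d := v_pow' Hmul hd0 p
  have hp2 : (2 : ℤ) ≤ (p : ℤ) := by exact_mod_cast hp.out.two_le
  have hdp1 : 1 ≤ v (d ^ p) := by rw [hdp]; nlinarith
  rcases eq_or_ne (c - d ^ p) 0 with h0 | hne
  · have : c = d ^ p := by linear_combination h0
    rw [this, hdp] at hvc; nlinarith
  · have h1 : 1 ≤ v (c - d ^ p) := h2.resolve_left hne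
    have := Hadd (c - d ^ p) (d ^ p) hne (pow_ne_zero p hd0) (by
      intro h0; exact hc0 (by linear_combination h0))
    rw [show c - d ^ p + d ^ p = c by ring, hvc] at this
    omega


lemma build_x {p : ℕ} [hp : Fact p.Prime] {k : Type*} [Field k] {v : k → ℤ}
    (Hmul : ∀ x y : k, x ≠ 0 → y ≠ 0 → v (x * y) = v x + v y)
    {u : kˣ} {w : k} (hw0 : w ≠ 0) (hvw : v w = 0) {M : ℤ}
    (huw : (u : k) - w ^ p = 0 ∨ M + 1 ≤ v ((u : k) - w ^ p)) :
    ∃ x : kˣ, ((x : k) - 1 = 0 ∨ M + 1 ≤ v ((x : k) - 1)) ∧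
      QuotientGroup.mk' (pthPowers p k) u = QuotientGroup.mk' (pthPowers p k) x := by
  set W : kˣ := Units.mk0 w hw0 with hW
  have hwp : w ^ p ≠ 0 := pow_ne_zero _ hw0
  refine ⟨u * (W⁻¹) ^ p, ?_, ?_⟩
  · have hxval : ((u * (W⁻¹) ^ p : kˣ) : k) = (u : k) * (w ^ p)⁻¹ := by
      rw [Units.val_mul, Units.val_pow_eq_pow_val, hW]
      simp [inv_pow]
    have hx1 : ((u * (W⁻¹) ^ p : kˣ) : k) - 1 = ((u : k) - w ^ p) * (w ^ p)⁻¹ := by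
      rw [hxval]
      field_simp
    rcases eq_or_ne ((u : k) - w ^ p) 0 with h0 | h0
    · left; rw [hx1, h0, zero_mul]
    · right
      have h1 := huw.resolve_left h0
      have hv2 : v ((w ^ p)⁻¹) = 0 := by
        rw [v_inv' Hmul hwp, v_pow' Hmul hw0, hvw, mul_zero, neg_zero]
      rw [hx1, Hmul _ _ h0 (inv_ne_zero hwp), hv2]
      omega
  · rw [QuotientGroup.mk'_eq_mk']
    exact ⟨(W⁻¹) ^ p, ⟨W⁻¹, rfl⟩, rfl⟩

theorem stmt_5 (p : ℕ) [Fact p.Prime] (hp2 : p ≠ 2)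
    (k : Type*) [Field k] [Algebra ℚ_[p] k] [FiniteDimensional ℚ_[p] k]
    (hμ : ∃ ζ : k, IsPrimitiveRoot ζ p)
    -- `v` is the normalized valuation of `k`:
    (v : k → ℤ)
    (hv_mul : ∀ x y : k, x ≠ 0 → y ≠ 0 → v (x * y) = v x + v y)
    (hv_add : ∀ x y : k, x ≠ 0 → y ≠ 0 → x + y ≠ 0 → min (v x) (v y) ≤ v (x + y))
    (hv_norm : ∃ π : k, π ≠ 0 ∧ v π = 1)
    (hv_int : ∀ x : k, x ≠ 0 → (0 ≤ v x ↔ 0 ≤ (Algebra.norm ℚ_[p] x).valuation))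
    -- `e₀ = v(p)/(p-1)`:
    (e0 : ℤ) (he0 : v (p : k) = e0 * ((p : ℤ) - 1))
    -- the integer `m`:
    (m : ℤ) (hm0 : 0 ≤ m) (hm : m < (p : ℤ) * e0) (hpm : (p : ℤ) ∣ m) :
    higherUnitsBar p v m = higherUnitsBar p v (m + 1) := by
  classical
  haveI : CharZero k := charZero_of_injective_algebraMap (algebraMap ℚ_[p] k).injective
  have hp' : Fact p.Prime := ‹_›
  have hppos : (0 : ℤ) < (p : ℤ) := by exact_mod_cast hp'.out.pos
  have hp3 : (3 : ℤ) ≤ (p : ℤ) := by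
    have h2 : 2 ≤ p := hp'.out.two_le
    have h3 : 3 ≤ p := by omega
    exact_mod_cast h3
  obtain ⟨π, hπ0, hπ1⟩ := hv_norm
  have he0pos : 1 ≤ e0 := by nlinarith
  have hp1 : 1 ≤ v ((p : ℕ) : k) := by rw [he0]; nlinarith
  -- notation
  set φ := QuotientGroup.mk' (pthPowers p k) with hφ
  have key : ∀ (M : ℤ), 0 ≤ M → M < (p : ℤ) * e0 → (p : ℤ) ∣ M →
      ∀ u : kˣ, (if M ≤ 0 then v (u : k) = 0 else ((u : k) - 1 = 0 ∨ M ≤ v ((u : k) - 1))) →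
      ∃ x : kˣ, ((x : k) - 1 = 0 ∨ M + 1 ≤ v ((x : k) - 1)) ∧ φ u = φ x := by
    intro M hM0 hMlt hMdvd u hu
    rcases eq_or_lt_of_le hM0 with hM | hMpos
    · -- M = 0
      subst hM
      rw [if_pos le_rfl] at hu
      obtain ⟨d, hd, h2⟩ := frob_step v hv_mul hv_add hv_int hp1 (u : k) (Or.inr hu.ge)
      obtain ⟨hd0, hvd⟩ := root_unit hv_mul hv_add (Units.ne_zero u) hu hd h2
      exact build_x hv_mul hd0 hvd (by
        rcases h2 with h | h
        exacts [Or.inl h, Or.inr (by omega)])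
    · -- 0 < M
      have hMne : ¬ (M ≤ 0) := by omega
      rw [if_neg hMne] at hu
      obtain ⟨n, rfl⟩ := hMdvd
      have hn1 : 1 ≤ n := by nlinarith
      have hne0 : n < e0 := by nlinarith
      set a : k := (u : k) - 1 with ha_def
      by_cases hsc : a = 0 ∨ (p : ℤ) * n + 1 ≤ v a
      · exact ⟨u, hsc, rfl⟩
      push_neg at hsc
      obtain ⟨ha0, hva1⟩ := hsc
      have hva : v a = (p : ℤ) * n := by
        have := hu.resolve_left ha0; omega
      have hπm : (π : k) ^ ((p : ℤ) * n) ≠ 0 := zpow_ne_zero _ hπ0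
      set c : k := a / π ^ ((p : ℤ) * n) with hc_def
      have hc0 : c ≠ 0 := div_ne_zero ha0 hπm
      have hvc : v c = 0 := by
        rw [hc_def, div_eq_mul_inv, hv_mul a _ ha0 (inv_ne_zero hπm),
          v_inv' hv_mul hπm, v_zpow' hv_mul hπ0, hπ1, hva]
        ring
      obtain ⟨d, hd, h2⟩ := frob_step v hv_mul hv_add hv_int hp1 c (Or.inr hvc.ge)
      obtain ⟨hd0, hvd⟩ := root_unit hv_mul hv_add hc0 hvc hd h2
      set b : k := d * π ^ (n : ℤ) with hb_def
      have hb0 : b ≠ 0 := mul_ne_zero hd0 (zpow_ne_zero _ hπ0)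
      have hvb : v b = n := by
        rw [hb_def, hv_mul _ _ hd0 (zpow_ne_zero _ hπ0), v_zpow' hv_mul hπ0, hπ1, hvd]
        ring
      have hvb1 : 1 ≤ v b := by omega
      have hbp : b ^ p = d ^ p * π ^ ((p : ℤ) * n) := by
        rw [hb_def, mul_pow, ← zpow_natCast (π ^ (n : ℤ)) p, ← zpow_mul, mul_comm (n : ℤ) (p : ℤ)]
      have habp : a - b ^ p = (c - d ^ p) * π ^ ((p : ℤ) * n) := by
        rw [hbp, hc_def]
        field_simp
      have hab : a - b ^ p = 0 ∨ (p : ℤ) * n + 1 ≤ v (a - b ^ p) := by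
        rcases eq_or_ne (c - d ^ p) 0 with h0 | h0
        · left; rw [habp, h0, zero_mul]
        · right
          have h1 := h2.resolve_left h0
          rw [habp, hv_mul _ _ h0 hπm, v_zpow' hv_mul hπ0, hπ1]
          omega
      set w : k := 1 + b with hw_def
      obtain ⟨hw0, hvw⟩ := v_one_add' hv_mul hv_add hb0 hvb1
      have hrange : Finset.range p \ {0} = Finset.Ioo 0 p := by
        ext i
        simp only [Finset.mem_sdiff, Finset.mem_range, Finset.mem_singleton, Finset.mem_Ioo]
        omega
      have hT : w ^ p = 1 + b ^ p + ∑ i ∈ Finset.Ioo 0 p, b ^ i * ((p.choose i : ℕ) : k) := by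
        rw [hw_def, add_comm (1 : k) b, add_pow, Finset.sum_range_succ,
          Finset.sum_eq_sum_sdiff_singleton_add (Finset.mem_range.mpr hp'.out.pos), hrange]
        simp [Nat.choose_self, Nat.choose_zero_right]
        ring
      have hS : (∑ i ∈ Finset.Ioo 0 p, b ^ i * ((p.choose i : ℕ) : k)) = 0 ∨
          (p : ℤ) * n + 1 ≤ v (∑ i ∈ Finset.Ioo 0 p, b ^ i * ((p.choose i : ℕ) : k)) := by
        refine v_sum_ge' hv_add _ _ _ ?_
        intro i hi
        rw [Finset.mem_Ioo] at hi
        obtain ⟨hi0, hip⟩ := hi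
        have hcne : ((p.choose i : ℕ) : k) ≠ 0 :=
          Nat.cast_ne_zero.mpr (Nat.choose_pos hip.le).ne'
        right
        rw [hv_mul _ _ (pow_ne_zero _ hb0) hcne, v_pow' hv_mul hb0, hvb]
        obtain ⟨t, ht⟩ := hp'.out.dvd_choose_self hi0.ne' hip
        have ht0 : t ≠ 0 := by
          rintro rfl
          rw [Nat.mul_zero] at ht
          exact (Nat.choose_pos hip.le).ne' ht
        have hvt : 0 ≤ v ((t : ℕ) : k) := v_natCast_nonneg hv_int ht0
        have hvc2 : v (((p.choose i) : ℕ) : k) = v ((p : ℕ) : k) + v ((t : ℕ) : k) := by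
          rw [ht]
          push_cast
          exact hv_mul _ _ (Nat.cast_ne_zero.mpr hp'.out.ne_zero) (Nat.cast_ne_zero.mpr ht0)
        rw [hvc2, he0]
        have hi1 : 1 ≤ (i : ℤ) := by exact_mod_cast hi0
        have hprod : (1 : ℤ) * ((p : ℤ) - 1) ≤ (e0 - n) * ((p : ℤ) - 1) := by
          apply mul_le_mul_of_nonneg_right <;> omega
        nlinarith [mul_le_mul_of_nonneg_right hi1 (by omega : (0:ℤ) ≤ n)]
      have huw : (u : k) - w ^ p = 0 ∨ (p : ℤ) * n + 1 ≤ v ((u : k) - w ^ p) := by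
        have hrw : (u : k) - w ^ p =
            (a - b ^ p) + (-(∑ i ∈ Finset.Ioo 0 p, b ^ i * ((p.choose i : ℕ) : k))) := by
          rw [hT, ha_def]; ring
        rw [hrw]
        refine v_add_ge' hv_add hab ?_
        rcases hS with h | h
        · left; rw [h, neg_zero]
        · rcases eq_or_ne (∑ i ∈ Finset.Ioo 0 p, b ^ i * ((p.choose i : ℕ) : k)) 0 with h0 | h0
          · left; rw [h0, neg_zero]
          · right; rw [v_neg' hv_mul h0]; exact h
      exact build_x hv_mul hw0 hvw huw
  -- now conclude
  have hm1 : ¬ (m + 1 ≤ 0) := by omega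
  unfold higherUnitsBar higherUnits
  rw [← hφ, MonoidHom.map_closure, MonoidHom.map_closure]
  apply le_antisymm
  · rw [Subgroup.closure_le]
    rintro q ⟨u, hu, rfl⟩
    obtain ⟨x, hx, hux⟩ := key m hm0 hm hpm u hu
    rw [hux]
    exact Subgroup.subset_closure ⟨x, by rw [Set.mem_setOf_eq, if_neg hm1]; exact hx, rfl⟩
  · rw [Subgroup.closure_le]
    rintro q ⟨u, hu, rfl⟩
    apply Subgroup.subset_closure
    refine ⟨u, ?_, rfl⟩
    rw [Set.mem_setOf_eq, if_neg hm1] at hu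
    rw [Set.mem_setOf_eq]
    by_cases hm00 : m ≤ 0
    · rw [if_pos hm00]
      rcases hu with h | h
      · have : (u : k) = 1 := by linear_combination h
        rw [this, v_one' hv_mul]
      · rcases eq_or_ne ((u : k) - 1) 0 with h0 | h0
        · have : (u : k) = 1 := by linear_combination h0
          rw [this, v_one' hv_mul]
        · have hb1 : 1 ≤ v ((u : k) - 1) := by omega
          have h2 := v_one_add' hv_mul hv_add h0 hb1
          rw [show (1 : k) + ((u : k) - 1) = (u : k) by ring] at h2
          exact h2.2
    · rw [if_neg hm00]
      rcases hu with h | h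
      · exact Or.inl h
      · exact Or.inr (by omega)

end Main
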